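/- arXiv:1708.07019 — 3 statements merged into one kernel-verified Lean document; each statement's English description precedes it below -/
import Mathlib

section
/- Let r ∈ (−1, 1) and let ρ be the 2×2 matrix with unit diagonal and off-diagonal entries equal to r (so ρ is symmetric positive definite). Let Y = (Y₁, Y₂) ∈ ℝ² and define q_β(λ) = (λ − Y)ᵀ ρ⁻¹ (λ − Y) for λ ∈ ℝ². Then the unique minimizer λ̂ of q_β over the cone Λ_β = (−∞, 0]² is: λ̂ = Y if Y₁ < 0 and Y₂ < 0; λ̂ = (Y₁ − rY₂, 0) if Y₂ ≥ 0 and Y₁ − rY₂ < 0; λ̂ = (0, Y₂ − rY₁) if Y₁ ≥ 0 and Y₂ − rY₁ < 0; and λ̂ = (0, 0) in all remaining cases. -/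
open Matrix

set_option maxHeartbeats 2000000 in
/-- Closed-form projection of `Y ∈ ℝ²` onto the negative quadrant `(−∞,0]²` with respect
to the quadratic form induced by the inverse of a 2×2 correlation matrix `ρ`. -/
theorem proj_negative_quadrant (r : ℝ) (hr₁ : -1 < r) (hr₂ : r < 1) (Y : Fin 2 → ℝ) :
    let ρ : Matrix (Fin 2) (Fin 2) ℝ := !![1, r; r, 1]
    let qβ : (Fin 2 → ℝ) → ℝ := fun lam => (lam - Y) ⬝ᵥ (ρ⁻¹ *ᵥ (lam - Y))
    let lamhat : Fin 2 → ℝ :=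
      if Y 0 < 0 ∧ Y 1 < 0 then Y
      else if Y 1 ≥ 0 ∧ Y 0 - r * Y 1 < 0 then ![Y 0 - r * Y 1, 0]
      else if Y 0 ≥ 0 ∧ Y 1 - r * Y 0 < 0 then ![0, Y 1 - r * Y 0]
      else ![0, 0]
    (lamhat 0 ≤ 0 ∧ lamhat 1 ≤ 0) ∧
    (∀ lam : Fin 2 → ℝ, lam 0 ≤ 0 → lam 1 ≤ 0 → qβ lamhat ≤ qβ lam) ∧
    (∀ lam : Fin 2 → ℝ, lam 0 ≤ 0 → lam 1 ≤ 0 → qβ lam = qβ lamhat → lam = lamhat) := by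
  intro ρ qβ lamhat
  have hs : (0:ℝ) < 1 - r^2 := by nlinarith
  have hq : ∀ lam : Fin 2 → ℝ, qβ lam =
      ((lam 0 - Y 0)^2 - 2*r*(lam 0 - Y 0)*(lam 1 - Y 1) + (lam 1 - Y 1)^2)/(1-r^2) := by
    intro lam
    show (lam - Y) ⬝ᵥ (ρ⁻¹ *ᵥ (lam - Y)) = _
    have hinv : ρ⁻¹ = (1 - r^2)⁻¹ • !![1, -r; -r, 1] := by
      rw [Matrix.inv_def]
      simp only [ρ, Matrix.det_fin_two_of, Matrix.adjugate_fin_two_of, Ring.inverse_eq_inv']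
      congr 1 <;> ring_nf
    rw [hinv]
    simp only [Matrix.smul_mulVec, Matrix.mulVec, dotProduct,
      Fin.sum_univ_two, Pi.smul_apply, Pi.sub_apply, smul_eq_mul,
      Matrix.cons_val', Matrix.cons_val_zero, Matrix.cons_val_one, Matrix.head_cons,
      Matrix.empty_val', Matrix.cons_val_fin_one, Matrix.head_fin_const,
      Matrix.smul_apply, Matrix.of_apply]
    field_simp
    ring
  -- ext lemma for Fin 2
  have hext : ∀ a b : Fin 2 → ℝ, a 0 = b 0 → a 1 = b 1 → a = b := by
    intro a b h0 h1; funext i; fin_cases i <;> assumption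
  by_cases h1 : Y 0 < 0 ∧ Y 1 < 0
  · have hl : lamhat = Y := if_pos h1
    refine ⟨⟨by rw [hl]; exact h1.1.le, by rw [hl]; exact h1.2.le⟩, ?_, ?_⟩
    · intro lam _ _
      rw [hl, hq, hq]
      apply div_le_div_of_nonneg_right ?_ hs.le |>.trans_eq rfl
      · nlinarith [sq_nonneg (lam 0 - Y 0 - r*(lam 1 - Y 1)), sq_nonneg (lam 1 - Y 1)]
    · intro lam _ _ heq
      rw [hl] at heq ⊢
      rw [hq, hq] at heq
      have heq' : (lam 0 - Y 0)^2 - 2*r*(lam 0 - Y 0)*(lam 1 - Y 1) + (lam 1 - Y 1)^2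
          = 0 := by field_simp at heq; linarith
      have hb : (lam 1 - Y 1)^2 ≤ 0 := by
        nlinarith [sq_nonneg (lam 0 - Y 0 - r*(lam 1 - Y 1))]
      have hb0 : lam 1 - Y 1 = 0 :=
        sq_eq_zero_iff.mp (le_antisymm hb (sq_nonneg _))
      have ha : (lam 0 - Y 0)^2 ≤ 0 := by
        simp only [hb0] at heq'; nlinarith [heq']
      have ha0 : lam 0 - Y 0 = 0 :=
        sq_eq_zero_iff.mp (le_antisymm ha (sq_nonneg _))
      exact hext _ _ (by linarith) (by linarith)
  · by_cases h2 : Y 1 ≥ 0 ∧ Y 0 - r * Y 1 < 0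
    · have hl : lamhat = ![Y 0 - r * Y 1, 0] := by
        simp only [lamhat, if_neg h1, if_pos h2]
      have hl0 : lamhat 0 = Y 0 - r * Y 1 := by rw [hl]; rfl
      have hl1 : lamhat 1 = 0 := by rw [hl]; rfl
      refine ⟨⟨by rw [hl0]; exact h2.2.le, by rw [hl1]⟩, ?_, ?_⟩
      · intro lam hlam0 hlam1
        rw [hq, hq, hl0, hl1]
        apply div_le_div_of_nonneg_right ?_ hs.le
        nlinarith [sq_nonneg (lam 0 - Y 0 + r * Y 1 - r * lam 1), sq_nonneg (lam 1),
          mul_nonneg (neg_nonneg.mpr hlam1) h2.1]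
      · intro lam hlam0 hlam1 heq
        rw [hq, hq, hl0, hl1] at heq
        have heq' : (lam 0 - Y 0)^2 - 2*r*(lam 0 - Y 0)*(lam 1 - Y 1) + (lam 1 - Y 1)^2
            = (Y 0 - r * Y 1 - Y 0)^2 - 2*r*(Y 0 - r * Y 1 - Y 0)*(0 - Y 1) + (0 - Y 1)^2 := by
          field_simp at heq; linarith
        have hv2 : (lam 1)^2 ≤ 0 := by
          nlinarith [sq_nonneg (lam 0 - Y 0 + r * Y 1 - r * lam 1),
            mul_nonneg (neg_nonneg.mpr hlam1) h2.1]
        have hv : lam 1 = 0 := sq_eq_zero_iff.mp (le_antisymm hv2 (sq_nonneg _))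
        have hu2 : (lam 0 - (Y 0 - r * Y 1))^2 ≤ 0 := by
          simp only [hv] at heq'; nlinarith [heq']
        have hu : lam 0 - (Y 0 - r * Y 1) = 0 :=
          sq_eq_zero_iff.mp (le_antisymm hu2 (sq_nonneg _))
        exact hext _ _ (by rw [hl0]; linarith) (by rw [hl1]; linarith)
    · by_cases h3 : Y 0 ≥ 0 ∧ Y 1 - r * Y 0 < 0
      · have hl : lamhat = ![0, Y 1 - r * Y 0] := by
          simp only [lamhat, if_neg h1, if_neg h2, if_pos h3]
        have hl0 : lamhat 0 = 0 := by rw [hl]; rfl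
        have hl1 : lamhat 1 = Y 1 - r * Y 0 := by rw [hl]; rfl
        refine ⟨⟨by rw [hl0], by rw [hl1]; exact h3.2.le⟩, ?_, ?_⟩
        · intro lam hlam0 hlam1
          rw [hq, hq, hl0, hl1]
          apply div_le_div_of_nonneg_right ?_ hs.le
          nlinarith [sq_nonneg (lam 1 - Y 1 + r * Y 0 - r * lam 0), sq_nonneg (lam 0),
            mul_nonneg (neg_nonneg.mpr hlam0) h3.1]
        · intro lam hlam0 hlam1 heq
          rw [hq, hq, hl0, hl1] at heq
          have heq' : (lam 0 - Y 0)^2 - 2*r*(lam 0 - Y 0)*(lam 1 - Y 1) + (lam 1 - Y 1)^2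
              = (0 - Y 0)^2 - 2*r*(0 - Y 0)*(Y 1 - r * Y 0 - Y 1) + (Y 1 - r * Y 0 - Y 1)^2 := by
            field_simp at heq; linarith
          have hv2 : (lam 0)^2 ≤ 0 := by
            nlinarith [sq_nonneg (lam 1 - Y 1 + r * Y 0 - r * lam 0),
              mul_nonneg (neg_nonneg.mpr hlam0) h3.1]
          have hv : lam 0 = 0 := sq_eq_zero_iff.mp (le_antisymm hv2 (sq_nonneg _))
          have hu2 : (lam 1 - (Y 1 - r * Y 0))^2 ≤ 0 := by
            simp only [hv] at heq'; nlinarith [heq']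
          have hu : lam 1 - (Y 1 - r * Y 0) = 0 :=
            sq_eq_zero_iff.mp (le_antisymm hu2 (sq_nonneg _))
          exact hext _ _ (by rw [hl0]; linarith) (by rw [hl1]; linarith)
      · have hl : lamhat = ![0, 0] := by
          simp only [lamhat, if_neg h1, if_neg h2, if_neg h3]
        have hl0 : lamhat 0 = 0 := by rw [hl]; rfl
        have hl1 : lamhat 1 = 0 := by rw [hl]; rfl
        push_neg at h1 h2 h3
        -- derive the key sign facts
        have hA : 0 ≤ Y 0 - r * Y 1 := by
          rcases le_or_gt 0 (Y 1) with hy1 | hy1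
          · exact h2 hy1
          · have hy0 : 0 ≤ Y 0 := by
              by_contra hc; push_neg at hc; exact absurd (h1 hc) (not_le.mpr hy1)
            have hB' := h3 hy0
            rcases le_or_gt r 0 with hrn | hrp
            · nlinarith
            · nlinarith
        have hB : 0 ≤ Y 1 - r * Y 0 := by
          rcases le_or_gt 0 (Y 0) with hy0 | hy0
          · exact h3 hy0
          · have hy1 : 0 ≤ Y 1 := h1 hy0
            have hA' := h2 hy1
            rcases le_or_gt 0 r with hrp | hrn
            · nlinarith
            · nlinarith
        refine ⟨⟨by rw [hl0], by rw [hl1]⟩, ?_, ?_⟩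
        · intro lam hlam0 hlam1
          rw [hq, hq, hl0, hl1]
          apply div_le_div_of_nonneg_right ?_ hs.le
          nlinarith [sq_nonneg (lam 0 - r * lam 1), sq_nonneg (lam 1),
            mul_nonneg (neg_nonneg.mpr hlam0) hA, mul_nonneg (neg_nonneg.mpr hlam1) hB]
        · intro lam hlam0 hlam1 heq
          rw [hq, hq, hl0, hl1] at heq
          have heq' : (lam 0 - Y 0)^2 - 2*r*(lam 0 - Y 0)*(lam 1 - Y 1) + (lam 1 - Y 1)^2
              = (0 - Y 0)^2 - 2*r*(0 - Y 0)*(0 - Y 1) + (0 - Y 1)^2 := by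
            field_simp at heq; linarith
          have hv2 : (lam 1)^2 ≤ 0 := by
            nlinarith [sq_nonneg (lam 0 - r * lam 1),
              mul_nonneg (neg_nonneg.mpr hlam0) hA, mul_nonneg (neg_nonneg.mpr hlam1) hB]
          have hv : lam 1 = 0 := sq_eq_zero_iff.mp (le_antisymm hv2 (sq_nonneg _))
          have hu2 : (lam 0)^2 ≤ 0 := by
            simp only [hv] at heq'
            nlinarith [heq', mul_nonneg (neg_nonneg.mpr hlam0) hA]
          have hu : lam 0 = 0 := sq_eq_zero_iff.mp (le_antisymm hu2 (sq_nonneg _))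
          exact hext _ _ (by rw [hl0]; exact hu) (by rw [hl1]; exact hv)
end

section
/- Let J be a symmetric positive definite p×p real matrix partitioned with respect to the first c coordinates (1 ≤ c < p) as J = [[J_β, J_βδ], [J_δβ, J_δ]], let G ∈ ℝ^p be partitioned as (G_β, G_δ), set Y := J⁻¹ G with blocks (Y_β, Y_δ), and let H = (I_c : 0) ∈ ℝ^{c×p}. Let Λ_β ⊆ ℝ^c be a nonempty closed convex cone. Then the quadratic form q(λ) = (λ − Y)ᵀ J (λ − Y) attains its minimum over the product set Λ_β × ℝ^{p−c} at a unique point λ̂ = (λ̂_β, λ̂_δ), where λ̂_β is the unique minimizer over Λ_β of q_β(λ_β) := (λ_β − Y_β)ᵀ (H J⁻¹ Hᵀ)⁻¹ (λ_β − Y_β), and λ̂_δ = J_δ⁻¹ G_δ − J_δ⁻¹ J_δβ λ̂_β. -/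
open Matrix

set_option maxHeartbeats 1000000

lemma quad_smul {n : Type*} [Fintype n] (M : Matrix n n ℝ) (a : ℝ) (v : n → ℝ) :
    (a • v) ⬝ᵥ M *ᵥ (a • v) = a^2 * (v ⬝ᵥ M *ᵥ v) := by
  rw [mulVec_smul, dotProduct_smul, smul_dotProduct]
  simp [smul_smul, sq, mul_assoc]

lemma quad_continuous {n : Type*} [Fintype n] (M : Matrix n n ℝ) (y : n → ℝ) :
    Continuous (fun v : n → ℝ => (v - y) ⬝ᵥ M *ᵥ (v - y)) := by
  simp only [mulVec, dotProduct]
  fun_prop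

lemma posdef_coercive {n : Type*} [Fintype n] {M : Matrix n n ℝ} (hM : M.PosDef) :
    ∃ μ : ℝ, 0 < μ ∧ ∀ v : n → ℝ, μ * ‖v‖^2 ≤ v ⬝ᵥ M *ᵥ v := by
  cases isEmpty_or_nonempty n with
  | inl h =>
    refine ⟨1, one_pos, fun v => ?_⟩
    have : v = 0 := Subsingleton.elim _ _
    simp [this]
  | inr h =>
    have hsne : (Metric.sphere (0 : n → ℝ) 1).Nonempty :=
      NormedSpace.sphere_nonempty.2 zero_le_one
    have hcont : Continuous (fun v : n → ℝ => v ⬝ᵥ M *ᵥ v) := by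
      simpa using quad_continuous M 0
    obtain ⟨u, hu, hmin⟩ := (isCompact_sphere (0 : n → ℝ) 1).exists_isMinOn hsne
      hcont.continuousOn
    have hunorm : ‖u‖ = 1 := by simpa using hu
    have hune : u ≠ 0 := fun h0 => by simp [h0] at hunorm
    refine ⟨u ⬝ᵥ M *ᵥ u, ?_, fun v => ?_⟩
    · have := hM.dotProduct_mulVec_pos hune
      simpa [star_trivial, dotProduct_mulVec] using this
    · by_cases hv : v = 0
      · simp [hv]
      · have hnv : (0:ℝ) < ‖v‖ := norm_pos_iff.2 hv
        have hmem : ‖v‖⁻¹ • v ∈ Metric.sphere (0 : n → ℝ) 1 := by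
          simp [norm_smul, abs_of_pos (inv_pos.2 hnv), inv_mul_cancel₀ hnv.ne']
        have hle : u ⬝ᵥ M *ᵥ u ≤ (‖v‖⁻¹ • v) ⬝ᵥ M *ᵥ (‖v‖⁻¹ • v) := hmin hmem
        rw [quad_smul M _ v] at hle
        have hp : (0:ℝ) < ‖v‖^2 := by positivity
        have := mul_le_mul_of_nonneg_right hle hp.le
        calc (u ⬝ᵥ M *ᵥ u) * ‖v‖^2 ≤ (‖v‖⁻¹^2 * (v ⬝ᵥ M *ᵥ v)) * ‖v‖^2 := this
          _ = v ⬝ᵥ M *ᵥ v := by field_simp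

lemma quad_smul' {n : Type*} [Fintype n] (M : Matrix n n ℝ) (a : ℝ) (v : n → ℝ) :
    (a • v) ⬝ᵥ M *ᵥ (a • v) = a^2 * (v ⬝ᵥ M *ᵥ v) := by
  rw [mulVec_smul, dotProduct_smul, smul_dotProduct]
  simp [smul_smul, sq, mul_assoc]

lemma posdef_pos {n : Type*} [Fintype n] {M : Matrix n n ℝ} (hM : M.PosDef)
    {v : n → ℝ} (hv : v ≠ 0) : 0 < v ⬝ᵥ M *ᵥ v := by
  have := hM.dotProduct_mulVec_pos hv
  simpa [star_trivial, dotProduct_mulVec] using this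

lemma posdef_nonneg {n : Type*} [Fintype n] {M : Matrix n n ℝ} (hM : M.PosDef)
    (v : n → ℝ) : 0 ≤ v ⬝ᵥ M *ᵥ v := by
  by_cases hv : v = 0
  · simp [hv]
  · exact (posdef_pos hM hv).le

/-- parallelogram-type identity for quadratic forms -/
lemma quad_parallelogram {n : Type*} [Fintype n] (M : Matrix n n ℝ) (u v : n → ℝ) :
    ((1/2 : ℝ) • (u + v)) ⬝ᵥ M *ᵥ ((1/2 : ℝ) • (u + v)) =
      (u ⬝ᵥ M *ᵥ u + v ⬝ᵥ M *ᵥ v) / 2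
        - ((1/2 : ℝ) • (u - v)) ⬝ᵥ M *ᵥ ((1/2 : ℝ) • (u - v)) := by
  rw [quad_smul', quad_smul']
  simp only [mulVec_add, mulVec_sub, dotProduct_add, dotProduct_sub, add_dotProduct,
    sub_dotProduct]
  ring

theorem exists_quad_min {n : Type*} [Fintype n] {M : Matrix n n ℝ} (hM : M.PosDef)
    (y : n → ℝ) {S : Set (n → ℝ)} (hne : S.Nonempty) (hcl : IsClosed S) :
    ∃ x ∈ S, ∀ z ∈ S, (x - y) ⬝ᵥ M *ᵥ (x - y) ≤ (z - y) ⬝ᵥ M *ᵥ (z - y) := by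
  obtain ⟨μ, hμ, hco⟩ := posdef_coercive hM
  obtain ⟨x0, hx0⟩ := hne
  set f : (n → ℝ) → ℝ := fun v => (v - y) ⬝ᵥ M *ᵥ (v - y) with hf
  have hfc : Continuous f := quad_continuous M y
  set r : ℝ := Real.sqrt (f x0 / μ) with hr
  have hfx0 : 0 ≤ f x0 := posdef_nonneg hM _
  have hball : ∀ z : n → ℝ, f z ≤ f x0 → ‖z - y‖ ≤ r := by
    intro z hz
    have h1 : μ * ‖z - y‖^2 ≤ f x0 := le_trans (hco (z - y)) hz
    have h2 : ‖z - y‖^2 ≤ f x0 / μ := (le_div_iff₀' hμ).2 h1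
    have := Real.sqrt_le_sqrt h2
    rwa [Real.sqrt_sq (norm_nonneg _)] at this
  set K : Set (n → ℝ) := S ∩ Metric.closedBall y r with hK
  have hKco : IsCompact K := (isCompact_closedBall y r).inter_left hcl
  have hx0K : x0 ∈ K := ⟨hx0, by
    rw [Metric.mem_closedBall, dist_eq_norm]; exact hball x0 le_rfl⟩
  obtain ⟨x, hxK, hxmin⟩ := hKco.exists_isMinOn ⟨x0, hx0K⟩ hfc.continuousOn
  refine ⟨x, hxK.1, fun z hz => ?_⟩
  by_cases hzb : z ∈ Metric.closedBall y r
  · exact hxmin ⟨hz, hzb⟩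
  · have h1 : f x ≤ f x0 := hxmin hx0K
    have h2 : f x0 < f z := by
      by_contra hcon
      push_neg at hcon
      exact hzb (by rw [Metric.mem_closedBall, dist_eq_norm]; exact hball z hcon)
    exact le_of_lt (lt_of_le_of_lt h1 h2)

theorem quad_min_unique {n : Type*} [Fintype n] {M : Matrix n n ℝ} (hM : M.PosDef)
    (y : n → ℝ) {S : Set (n → ℝ)} (hconv : Convex ℝ S)
    {x z : n → ℝ} (hx : x ∈ S) (hz : z ∈ S)
    (hxmin : ∀ w ∈ S, (x - y) ⬝ᵥ M *ᵥ (x - y) ≤ (w - y) ⬝ᵥ M *ᵥ (w - y))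
    (heq : (z - y) ⬝ᵥ M *ᵥ (z - y) = (x - y) ⬝ᵥ M *ᵥ (x - y)) : z = x := by
  by_contra hne
  set mid : n → ℝ := (1/2 : ℝ) • (x + z) with hmid
  have hmidS : mid ∈ S := by
    have := hconv hx hz (by norm_num : (0:ℝ) ≤ 1/2) (by norm_num : (0:ℝ) ≤ 1/2) (by norm_num)
    simpa [smul_add, hmid] using this
  have hiden : mid - y = (1/2 : ℝ) • ((x - y) + (z - y)) := by
    rw [hmid]; ext i; simp; ring
  have hpar := quad_parallelogram M (x - y) (z - y)
  have hdiff : (x - y) - (z - y) = x - z := by ext i; simp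
  have hpos : 0 < ((1/2 : ℝ) • (x - z)) ⬝ᵥ M *ᵥ ((1/2 : ℝ) • (x - z)) := by
    apply posdef_pos hM
    intro h0
    apply hne
    have : x - z = 0 := by
      have := congrArg (fun v => (2:ℝ) • v) h0
      simpa [smul_smul] using this
    exact (sub_eq_zero.mp this).symm
  have hlt : (mid - y) ⬝ᵥ M *ᵥ (mid - y) < (x - y) ⬝ᵥ M *ᵥ (x - y) := by
    rw [hiden, hpar, hdiff, heq]
    linarith
  exact absurd (hxmin mid hmidS) (not_le.2 hlt)

set_option linter.unusedSectionVars false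
variable {n₁ n₂ : Type*} [Fintype n₁] [Fintype n₂] [DecidableEq n₁] [DecidableEq n₂]

lemma HMH (M : Matrix (n₁ ⊕ n₂) (n₁ ⊕ n₂) ℝ) :
    (fromCols 1 0 : Matrix n₁ (n₁ ⊕ n₂) ℝ) * M * (fromCols 1 0)ᵀ = M.toBlocks₁₁ := by
  rw [← fromBlocks_toBlocks M, fromCols_mul_fromBlocks, transpose_fromCols]
  simp [fromCols_mul_fromRows]
  exact (fromCols_mul_fromRows _ _ _ _).trans (by simp)

lemma blocks_decomp {M : Matrix (n₁ ⊕ n₂) (n₁ ⊕ n₂) ℝ} (hM : M.IsSymm) :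
    M = fromBlocks M.toBlocks₁₁ M.toBlocks₁₂ (M.toBlocks₁₂)ᴴ M.toBlocks₂₂ := by
  have h21 : M.toBlocks₂₁ = (M.toBlocks₁₂)ᴴ := by
    ext i j
    simp only [conjTranspose_apply, toBlocks₂₁, toBlocks₁₂, of_apply, star_trivial]
    exact (hM.apply (Sum.inr i) (Sum.inl j)).symm
  rw [← h21, fromBlocks_toBlocks]

lemma posdef_toBlocks₂₂ {M : Matrix (n₁ ⊕ n₂) (n₁ ⊕ n₂) ℝ} (hM : M.PosDef) :
    M.toBlocks₂₂.PosDef := by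
  refine PosDef.of_dotProduct_mulVec_pos ?_ ?_
  · ext i j
    simpa [toBlocks₂₂, conjTranspose_apply] using congrFun (congrFun hM.1 (Sum.inr i)) (Sum.inr j)
  · intro v hv
    have hw : Sum.elim (0 : n₁ → ℝ) v ≠ 0 := by
      intro h; apply hv; funext i
      exact congrFun h (Sum.inr i)
    have := hM.dotProduct_mulVec_pos hw
    nth_rewrite 1 [← fromBlocks_toBlocks M] at this
    simpa [fromBlocks_mulVec, sumElim_dotProduct_sumElim, Function.star_sumElim] using this

lemma posdef_schur {A : Matrix n₁ n₁ ℝ} {B : Matrix n₁ n₂ ℝ} {D : Matrix n₂ n₂ ℝ}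
    (hD : D.PosDef) (hJ : (fromBlocks A B Bᴴ D).PosDef) :
    (A - B * D⁻¹ * Bᴴ).PosDef := by
  letI := hD.isUnit.invertible
  refine PosDef.of_dotProduct_mulVec_pos ?_ ?_
  · exact (IsHermitian.fromBlocks₂₂ A B hD.1).mp hJ.1
  · intro x hx
    have hw : (Sum.elim x (-((D⁻¹ * Bᴴ) *ᵥ x)) : n₁ ⊕ n₂ → ℝ) ≠ 0 := by
      intro h; apply hx; funext i
      exact congrFun h (Sum.inl i)
    have hpos := hJ.dotProduct_mulVec_pos hw
    rw [dotProduct_mulVec] at hpos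
    have := schur_complement_eq₂₂ A B x (-((D⁻¹ * Bᴴ) *ᵥ x)) hD.1
    rw [this] at hpos
    simpa [dotProduct_mulVec] using hpos

lemma inv_toBlocks₁₁_eq {A : Matrix n₁ n₁ ℝ} {B : Matrix n₁ n₂ ℝ} {D : Matrix n₂ n₂ ℝ}
    (hD : D.PosDef) (hJ : (fromBlocks A B Bᴴ D).PosDef) :
    (fromBlocks A B Bᴴ D)⁻¹.toBlocks₁₁ = (A - B * D⁻¹ * Bᴴ)⁻¹ := by
  letI := hD.isUnit.invertible
  letI := hJ.isUnit.invertible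
  have hSc := posdef_schur hD hJ
  have hscinst : Invertible (A - B * ⅟D * Bᴴ) := by
    rw [invOf_eq_nonsing_inv]; exact hSc.isUnit.invertible
  letI := hscinst
  have h1 : (fromBlocks A B Bᴴ D)⁻¹ = ⅟(fromBlocks A B Bᴴ D) := (invOf_eq_nonsing_inv _).symm
  rw [h1, invOf_fromBlocks₂₂_eq A B Bᴴ D, toBlocks_fromBlocks₁₁, invOf_eq_nonsing_inv,
    invOf_eq_nonsing_inv]


/-- Corollary 1 (deterministic core): for a symmetric positive definite block matrix `J`,
`G ∈ ℝ^p`, `Y = J⁻¹ G`, `H = (I_c : 0)` and a nonempty closed convex cone `Λ_β ⊆ ℝ^c`,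
the quadratic form `q(λ) = (λ − Y)ᵀ J (λ − Y)` attains its minimum over `Λ_β × ℝ^{p−c}`
at a unique point `λ̂ = (λ̂_β, λ̂_δ)`, where `λ̂_β` is the unique minimizer over `Λ_β` of
`q_β(λ_β) = (λ_β − Y_β)ᵀ (H J⁻¹ Hᵀ)⁻¹ (λ_β − Y_β)` and
`λ̂_δ = J_δ⁻¹ G_δ − J_δ⁻¹ J_δβ λ̂_β`. -/
theorem cone_product_minimizer {c m : ℕ} (hc : 1 ≤ c) (hm : 1 ≤ m)
    (J : Matrix (Fin c ⊕ Fin m) (Fin c ⊕ Fin m) ℝ) (hJsymm : J.IsSymm) (hJ : J.PosDef)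
    (G : Fin c ⊕ Fin m → ℝ)
    (Λβ : Set (Fin c → ℝ)) (hΛne : Λβ.Nonempty) (hΛclosed : IsClosed Λβ)
    (hΛconvex : Convex ℝ Λβ) (hΛcone : ∀ x ∈ Λβ, ∀ a : ℝ, 0 < a → a • x ∈ Λβ) :
    let Jdb := J.toBlocks₂₁
    let Jd := J.toBlocks₂₂
    let H : Matrix (Fin c) (Fin c ⊕ Fin m) ℝ := Matrix.fromCols 1 0
    let Y : Fin c ⊕ Fin m → ℝ := J⁻¹ *ᵥ G
    let Yb : Fin c → ℝ := fun i => Y (Sum.inl i)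
    let Gd : Fin m → ℝ := fun i => G (Sum.inr i)
    let q : (Fin c ⊕ Fin m → ℝ) → ℝ := fun lam => (lam - Y) ⬝ᵥ (J *ᵥ (lam - Y))
    let qβ : (Fin c → ℝ) → ℝ :=
      fun lamb => (lamb - Yb) ⬝ᵥ ((H * J⁻¹ * Hᵀ)⁻¹ *ᵥ (lamb - Yb))
    ∃ lambhat ∈ Λβ,
      (∀ lamb ∈ Λβ, qβ lambhat ≤ qβ lamb) ∧
      (∀ lamb ∈ Λβ, qβ lamb = qβ lambhat → lamb = lambhat) ∧
      (let lamdhat : Fin m → ℝ := Jd⁻¹ *ᵥ Gd - Jd⁻¹ *ᵥ (Jdb *ᵥ lambhat)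
       let lamhat : Fin c ⊕ Fin m → ℝ := Sum.elim lambhat lamdhat
       (∀ lam : Fin c ⊕ Fin m → ℝ, (fun i => lam (Sum.inl i)) ∈ Λβ → q lamhat ≤ q lam) ∧
       (∀ lam : Fin c ⊕ Fin m → ℝ, (fun i => lam (Sum.inl i)) ∈ Λβ →
          q lam = q lamhat → lam = lamhat)) := by
  intro Jdb Jd H Y Yb Gd q qβ
  set A := J.toBlocks₁₁ with hA
  set B := J.toBlocks₁₂ with hB
  have hblk : J = fromBlocks A B Bᴴ Jd := blocks_decomp hJsymm
  have hJdb : Jdb = Bᴴ := by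
    have := congrArg Matrix.toBlocks₂₁ hblk
    simpa [toBlocks_fromBlocks₂₁] using this
  have hD : Jd.PosDef := posdef_toBlocks₂₂ hJ
  have hJ' : (fromBlocks A B Bᴴ Jd).PosDef := hblk ▸ hJ
  set Sc := A - B * Jd⁻¹ * Bᴴ with hScdef
  have hSc : Sc.PosDef := posdef_schur hD hJ'
  -- identification of qβ with the Schur complement quadratic form
  have hHJH : (H * J⁻¹ * Hᵀ)⁻¹ = Sc := by
    have h1 : H * J⁻¹ * Hᵀ = (J⁻¹).toBlocks₁₁ := HMH _
    have h2 : (J⁻¹).toBlocks₁₁ = Sc⁻¹ := by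
      rw [hblk]; exact inv_toBlocks₁₁_eq hD hJ'
    rw [h1, h2]
    letI := hSc.isUnit.invertible
    exact inv_inv_of_invertible Sc
  have hqβ : ∀ lamb : Fin c → ℝ, qβ lamb = (lamb - Yb) ⬝ᵥ Sc *ᵥ (lamb - Yb) := by
    intro lamb; simp only [qβ, hHJH]
  -- the lower right block of Y
  set Yd : Fin m → ℝ := fun i => Y (Sum.inr i) with hYd
  have hYsplit : Y = Sum.elim Yb Yd := by
    funext i; cases i <;> rfl
  -- key decomposition of q
  have key : ∀ lam : Fin c ⊕ Fin m → ℝ,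
      q lam = ((Jd⁻¹ * Bᴴ) *ᵥ ((fun i => lam (Sum.inl i)) - Yb)
                + ((fun i => lam (Sum.inr i)) - Yd)) ⬝ᵥ
              Jd *ᵥ ((Jd⁻¹ * Bᴴ) *ᵥ ((fun i => lam (Sum.inl i)) - Yb)
                + ((fun i => lam (Sum.inr i)) - Yd))
            + qβ (fun i => lam (Sum.inl i)) := by
    intro lam
    letI := hD.isUnit.invertible
    have hsplit : lam - Y = Sum.elim ((fun i => lam (Sum.inl i)) - Yb)
        ((fun i => lam (Sum.inr i)) - Yd) := by
      funext i; cases i <;> rfl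
    have := schur_complement_eq₂₂ A B ((fun i => lam (Sum.inl i)) - Yb)
      ((fun i => lam (Sum.inr i)) - Yd) hD.1
    simp only [star_trivial] at this
    rw [hqβ]
    show (lam - Y) ⬝ᵥ (J *ᵥ (lam - Y)) = _
    rw [hsplit, hblk, dotProduct_mulVec, this, ← dotProduct_mulVec, ← dotProduct_mulVec]
  -- existence and uniqueness of the minimizer of qβ over Λβ
  obtain ⟨lambhat, hmem, hminβ⟩ := exists_quad_min hSc Yb hΛne hΛclosed
  refine ⟨lambhat, hmem, ?_, ?_, ?_⟩
  · intro lamb hlamb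
    rw [hqβ, hqβ]
    exact hminβ lamb hlamb
  · intro lamb hlamb heq
    rw [hqβ, hqβ] at heq
    exact quad_min_unique hSc Yb hΛconvex hmem hlamb
      (fun w hw => hminβ w hw) heq
  · intro lamdhat lamhat
    letI := hD.isUnit.invertible
    -- J Y = G in the lower block
    have hJY : J *ᵥ Y = G := by
      show J *ᵥ (J⁻¹ *ᵥ G) = G
      rw [mulVec_mulVec, mul_nonsing_inv _ ((isUnit_iff_isUnit_det J).mp hJ.isUnit), one_mulVec]
    have hGd : Bᴴ *ᵥ Yb + Jd *ᵥ Yd = Gd := by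
      funext i
      have := congrFun hJY (Sum.inr i)
      rw [hblk, hYsplit, fromBlocks_mulVec] at this
      simpa using this
    have hGdinv : Jd⁻¹ *ᵥ Gd = Jd⁻¹ *ᵥ (Bᴴ *ᵥ Yb) + Yd := by
      rw [← hGd]
      simp [mulVec_add, mulVec_mulVec, nonsing_inv_mul _ ((isUnit_iff_isUnit_det Jd).mp hD.isUnit)]
    -- the cross term vanishes at lamhat
    have hw0 : (Jd⁻¹ * Bᴴ) *ᵥ (lambhat - Yb) + (lamdhat - Yd) = 0 := by
      show (Jd⁻¹ * Bᴴ) *ᵥ (lambhat - Yb)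
          + ((Jd⁻¹ *ᵥ Gd - Jd⁻¹ *ᵥ (Jdb *ᵥ lambhat)) - Yd) = 0
      rw [hGdinv, hJdb]
      simp only [mulVec_sub, mulVec_mulVec]
      abel
    have hlamhatb : (fun i => lamhat (Sum.inl i)) = lambhat := rfl
    have hlamhatd : (fun i => lamhat (Sum.inr i)) = lamdhat := rfl
    have hqhat : q lamhat = qβ lambhat := by
      rw [key lamhat, hlamhatb, hlamhatd, hw0]
      simp
    constructor
    · intro lam hlam
      rw [hqhat, key lam]
      have h1 := posdef_nonneg hD ((Jd⁻¹ * Bᴴ) *ᵥ ((fun i => lam (Sum.inl i)) - Yb)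
                + ((fun i => lam (Sum.inr i)) - Yd))
      have h2 : qβ lambhat ≤ qβ (fun i => lam (Sum.inl i)) := by
        rw [hqβ, hqβ]; exact hminβ _ hlam
      linarith
    · intro lam hlam heq
      rw [hqhat, key lam] at heq
      set w := (Jd⁻¹ * Bᴴ) *ᵥ ((fun i => lam (Sum.inl i)) - Yb)
                + ((fun i => lam (Sum.inr i)) - Yd) with hwdef
      have h1 := posdef_nonneg hD w
      have h2 : qβ lambhat ≤ qβ (fun i => lam (Sum.inl i)) := by
        rw [hqβ, hqβ]; exact hminβ _ hlam
      have hqeq : qβ (fun i => lam (Sum.inl i)) = qβ lambhat := by linarith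
      have hwq : w ⬝ᵥ Jd *ᵥ w = 0 := by linarith
      have hwz : w = 0 := by
        by_contra hwne
        exact absurd hwq (posdef_pos hD hwne).ne'
      have hbeq : (fun i => lam (Sum.inl i)) = lambhat := by
        apply quad_min_unique hSc Yb hΛconvex hmem hlam (fun z hz => hminβ z hz)
        rw [hqβ, hqβ] at hqeq
        exact hqeq
      -- deduce the δ-part
      have hweq : (Jd⁻¹ * Bᴴ) *ᵥ (lambhat - Yb) + ((fun i => lam (Sum.inr i)) - Yd) = 0 := by
        rw [← hbeq]; exact hwz
      have hdeq : (fun i => lam (Sum.inr i)) = lamdhat := by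
        have h3 := sub_eq_zero.mpr (hweq.trans hw0.symm)
        have h4 : ((fun i => lam (Sum.inr i)) - Yd) - (lamdhat - Yd) = 0 := by
          rw [← h3]; abel
        have h5 : (fun i => lam (Sum.inr i)) - lamdhat = 0 := by
          rw [← h4]; abel
        exact sub_eq_zero.mp h5
      funext i
      cases i with
      | inl i => exact congrFun hbeq i
      | inr i => exact congrFun hdeq i
end

section
/- Let d ≥ 1 and r ≥ 1, let B = (b_{jt}) be a d×r matrix with nonnegative real entries such that Σ_{t=1}^r b_{jt} = 1 for every j, and let S₁,…,S_r be independent unit Fréchet random variables on a probability space (Ω, P). Define Z_j := max_{t=1,…,r} b_{jt} S_t and let F(z) := exp(−1/z) for z > 0 denote the common marginal distribution function of the Z_j. Then for every x ∈ [0,∞)^d, lim_{t → 0⁺} t⁻¹ · P[ 1 − F(Z₁) ≤ t x₁ or … or 1 − F(Z_d) ≤ t x_d ] = Σ_{t=1}^r max_{j=1,…,d} b_{jt} x_j. -/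
open MeasureTheory Filter Set

lemma frechet_lt_aux {Ω : Type*} [MeasurableSpace Ω] (P : Measure Ω) [IsProbabilityMeasure P]
    (S : Ω → ℝ)
    (hf : ∀ x : ℝ, 0 < x → P {ω | S ω ≤ x} = ENNReal.ofReal (Real.exp (-1 / x)))
    {a : ℝ} (ha : 0 < a) :
    P {ω | S ω < a} = ENNReal.ofReal (Real.exp (-1 / a)) := by
  set b : ℕ → ℝ := fun n => a - a / (n + 2) with hb
  have hb2 : ∀ n : ℕ, 0 < (n : ℝ) + 2 := fun n => by positivity
  have hbpos : ∀ n, 0 < b n := by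
    intro n
    have h1 : a / (n + 2) < a := by
      rw [div_lt_iff₀ (hb2 n)]
      nlinarith
    simp only [hb]; linarith
  have hblt : ∀ n, b n < a := by
    intro n
    have : 0 < a / (n + 2) := div_pos ha (hb2 n)
    simp only [hb]; linarith
  have hbmono : Monotone b := by
    intro m n hmn
    have : a / (n + 2) ≤ a / (m + 2) := by
      apply div_le_div_of_nonneg_left ha.le (hb2 m)
      exact_mod_cast by linarith [(Nat.cast_le (α := ℝ)).mpr hmn]
    simp only [hb]; linarith
  have hbtend : Tendsto b atTop (nhds a) := by
    have h0 : Tendsto (fun n : ℕ => a / (n + 2)) atTop (nhds 0) := by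
      apply Tendsto.div_atTop tendsto_const_nhds
      exact tendsto_atTop_add_const_right _ 2 tendsto_natCast_atTop_atTop
    have h1 : Tendsto (fun _ : ℕ => a) atTop (nhds a) := tendsto_const_nhds
    simpa using h1.sub h0
  have hset : {ω | S ω < a} = ⋃ n, {ω | S ω ≤ b n} := by
    ext ω
    simp only [mem_setOf_eq, mem_iUnion]
    constructor
    · intro h
      obtain ⟨n, hn⟩ := (hbtend.eventually (eventually_gt_nhds h)).exists
      exact ⟨n, hn.le⟩
    · rintro ⟨n, hn⟩
      exact lt_of_le_of_lt hn (hblt n)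
  rw [hset, Directed.measure_iUnion]
  · have heq : ∀ n, P {ω | S ω ≤ b n} = ENNReal.ofReal (Real.exp (-1 / b n)) :=
      fun n => hf _ (hbpos n)
    simp only [heq]
    have hmono2 : Monotone fun n => ENNReal.ofReal (Real.exp (-1 / b n)) := by
      intro m n hmn
      have hbb := hbmono hmn
      have : -1 / b m ≤ -1 / b n := by
        rw [neg_div, neg_div, neg_le_neg_iff]
        exact one_div_le_one_div_of_le (hbpos m) hbb
      exact ENNReal.ofReal_le_ofReal (Real.exp_le_exp.mpr this)
    have htend : Tendsto (fun n => ENNReal.ofReal (Real.exp (-1 / b n))) atTop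
        (nhds (ENNReal.ofReal (Real.exp (-1 / a)))) := by
      apply (ENNReal.continuous_ofReal.tendsto _).comp
      apply (Real.continuous_exp.tendsto _).comp
      exact tendsto_const_nhds.div hbtend ha.ne'
    exact tendsto_nhds_unique (tendsto_atTop_iSup hmono2) htend
  · intro m n
    exact ⟨max m n, fun ω h => le_trans h (hbmono (le_max_left m n)),
      fun ω h => le_trans h (hbmono (le_max_right m n))⟩

lemma frechet_multi_aux {Ω : Type*} [MeasurableSpace Ω] (P : Measure Ω) [IsProbabilityMeasure P]
    (S : Ω → ℝ)
    (hf : ∀ x : ℝ, 0 < x → P {ω | S ω ≤ x} = ENNReal.ofReal (Real.exp (-1 / x)))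
    {d : ℕ} (hdne : (Finset.univ : Finset (Fin d)).Nonempty)
    (c : Fin d → ℝ) (hc : ∀ j, 0 ≤ c j) :
    P {ω | ∀ j, c j * S ω < 1}
      = ENNReal.ofReal (Real.exp (-(Finset.univ.sup' hdne c))) := by
  obtain ⟨j₀, hj₀, hm⟩ := Finset.exists_mem_eq_sup' hdne c
  set m := Finset.univ.sup' hdne c with hmdef
  have hm0 : 0 ≤ m := hm ▸ hc j₀
  rcases eq_or_lt_of_le hm0 with hmz | hmpos
  · have hcall : ∀ j, c j = 0 := by
      intro j
      have h1 : c j ≤ m := Finset.le_sup' c (Finset.mem_univ j)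
      have h2 := hc j
      linarith
    have : {ω | ∀ j : Fin d, c j * S ω < 1} = Set.univ := by
      ext ω; simp [hcall]
    rw [this, measure_univ, ← hmz]
    norm_num
  · have hset : {ω | ∀ j, c j * S ω < 1} = {ω | S ω < 1 / m} := by
      ext ω
      simp only [mem_setOf_eq]
      constructor
      · intro h
        have hh := h j₀
        rw [← hm] at hh
        rw [lt_div_iff₀ hmpos, mul_comm]
        exact hh
      · intro h j
        have hy : m * S ω < 1 := by
          rw [mul_comm]; exact (lt_div_iff₀ hmpos).mp h
        rcases le_or_gt (S ω) 0 with hy0 | hy0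
        · exact lt_of_le_of_lt (mul_nonpos_of_nonneg_of_nonpos (hc j) hy0) one_pos
        · calc c j * S ω ≤ m * S ω :=
                mul_le_mul_of_nonneg_right (Finset.le_sup' c (Finset.mem_univ j)) hy0.le
            _ < 1 := hy
    rw [hset, frechet_lt_aux P S hf (by positivity)]
    congr 1
    field_simp

lemma tendsto_finset_sup'_aux {ι α : Type*} {l : Filter α} (s : Finset ι) (hs : s.Nonempty)
    (f : ι → α → ℝ) (g : ι → ℝ)
    (h : ∀ i ∈ s, Tendsto (f i) l (nhds (g i))) :
    Tendsto (fun a => s.sup' hs fun i => f i a) l (nhds (s.sup' hs g)) := by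
  induction hs using Finset.Nonempty.cons_induction with
  | singleton a =>
    have e1 : ∀ b : α, ({a} : Finset ι).sup' (Finset.singleton_nonempty a) (fun i => f i b) = f a b :=
      fun b => Finset.sup'_singleton _
    have e2 : ({a} : Finset ι).sup' (Finset.singleton_nonempty a) g = g a := Finset.sup'_singleton _
    rw [e2]
    exact (h a (Finset.mem_singleton_self a)).congr (fun b => (e1 b).symm)
  | cons a s ha hs ih =>
    simp only [Finset.sup'_cons hs]
    exact (h a (Finset.mem_cons_self a s)).max
      (ih (fun i hi => h i (Finset.mem_cons_of_mem hi)))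

lemma mul_sup'_aux {ι : Type*} {s : Finset ι} (hs : s.Nonempty) (f : ι → ℝ) {c : ℝ}
    (hc : 0 ≤ c) : c * s.sup' hs f = s.sup' hs fun i => c * f i := by
  rw [Finset.comp_sup'_eq_sup'_comp hs (fun y => c * y)
    (fun p q => by exact mul_max_of_nonneg p q hc)]
  rfl

lemma neglog_slope_aux (y : ℝ) :
    Filter.Tendsto (fun t : ℝ => -Real.log (1 - t * y) / t)
      (nhdsWithin 0 (Set.Ioi 0)) (nhds y) := by
  have hD : HasDerivAt (fun t : ℝ => -Real.log (1 - t * y)) y 0 := by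
    have h1 : HasDerivAt (fun t : ℝ => 1 - t * y) (-(1 * y)) 0 :=
      ((hasDerivAt_id 0).mul_const y).const_sub 1
    have h2 := (h1.log (by norm_num)).neg
    simp at h2; exact h2
  have h3 := hasDerivAt_iff_tendsto_slope.mp hD
  have h4 : Tendsto (slope (fun t : ℝ => -Real.log (1 - t * y)) 0)
      (nhdsWithin 0 (Set.Ioi 0)) (nhds y) :=
    h3.mono_left (nhdsWithin_mono 0 (fun t ht => ne_of_gt ht))
  apply h4.congr
  intro t
  simp [slope_def_field, Real.log_one]

/-- The max-linear model has stable tail dependence function `ℓ(x; B) = Σ_t max_j b_{jt} x_j`: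
with `F(z) = exp(−1/z)` for `z > 0` (and `0` otherwise) the common margin of the `Z_j`,
`lim_{t→0⁺} t⁻¹ P[∃ j, 1 − F(Z_j) ≤ t x_j] = Σ_t max_j b_{jt} x_j`. -/
theorem max_linear_stdf_limit {d r : ℕ} (hd : 0 < d) (hr : 0 < r)
    (B : Fin d → Fin r → ℝ) (hB : ∀ j t, 0 ≤ B j t)
    (hrow : ∀ j, ∑ t, B j t = 1)
    {Ω : Type*} [MeasurableSpace Ω] (P : Measure Ω) [IsProbabilityMeasure P]
    (S : Fin r → Ω → ℝ) (hSmeas : ∀ t, Measurable (S t))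
    (hindep : ProbabilityTheory.iIndepFun S P)
    (hfrechet : ∀ t, ∀ x : ℝ, 0 < x →
      P {ω | S t ω ≤ x} = ENNReal.ofReal (Real.exp (-1 / x)))
    (hfrechet0 : ∀ t, ∀ x : ℝ, x ≤ 0 → P {ω | S t ω ≤ x} = 0)
    (Z : Fin d → Ω → ℝ)
    (hZ : ∀ j ω, Z j ω = Finset.univ.sup' (Finset.univ_nonempty_iff.mpr ⟨⟨0, hr⟩⟩)
      (fun t => B j t * S t ω))
    (F : ℝ → ℝ) (hF : ∀ z : ℝ, F z = if 0 < z then Real.exp (-1 / z) else 0)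
    (x : Fin d → ℝ) (hx : ∀ j, 0 ≤ x j) :
    Filter.Tendsto
      (fun t : ℝ => t⁻¹ * (P {ω | ∃ j, 1 - F (Z j ω) ≤ t * x j}).toReal)
      (nhdsWithin 0 (Set.Ioi 0))
      (nhds (∑ t, Finset.univ.sup' (Finset.univ_nonempty_iff.mpr ⟨⟨0, hd⟩⟩)
        (fun j => B j t * x j))) := by
  classical
  have hdne : (Finset.univ : Finset (Fin d)).Nonempty := Finset.univ_nonempty_iff.mpr ⟨⟨0, hd⟩⟩
  have hrne : (Finset.univ : Finset (Fin r)).Nonempty := Finset.univ_nonempty_iff.mpr ⟨⟨0, hr⟩⟩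
  set L : ℝ → Fin d → ℝ := fun t j => -Real.log (1 - t * x j) with hLdef
  set G : ℝ → ℝ := fun t => ∑ s, Finset.univ.sup' hdne (fun j => L t j * B j s) with hGdef
  set T : ℝ := ∑ s, Finset.univ.sup' hdne (fun j => B j s * x j) with hTdef
  set X : ℝ := Finset.univ.sup' hdne x with hXdef
  have hX0 : 0 ≤ X := le_trans (hx ⟨0, hd⟩) (Finset.le_sup' x (Finset.mem_univ _))
  have hδ : (0:ℝ) < (X + 1)⁻¹ := by positivity
  have hev : ∀ᶠ t in nhdsWithin (0:ℝ) (Set.Ioi 0), t ∈ Set.Ioo 0 ((X + 1)⁻¹) := by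
    filter_upwards [Ioo_mem_nhdsGT hδ] with t ht
    exact ht
  have hfacts : ∀ t : ℝ, t ∈ Set.Ioo (0:ℝ) ((X + 1)⁻¹) → ∀ j, t * x j < 1 := by
    rintro t ⟨ht0, ht1⟩ j
    have h1 : x j ≤ X := Finset.le_sup' x (Finset.mem_univ j)
    have h2 : t * (X + 1) < 1 := by
      have := mul_lt_mul_of_pos_right ht1 (show (0:ℝ) < X + 1 by linarith)
      rwa [inv_mul_cancel₀ (by linarith : X + 1 ≠ 0)] at this
    nlinarith [hx j, mul_nonneg ht0.le (sub_nonneg.mpr h1)]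
  have hL0 : ∀ t ∈ Set.Ioo (0:ℝ) ((X + 1)⁻¹), ∀ j, 0 ≤ L t j := by
    intro t ht j
    have h1 := hfacts t ht j
    have h2 : 0 ≤ t * x j := mul_nonneg ht.1.le (hx j)
    simp only [hLdef]
    have := Real.log_nonpos (show (0:ℝ) ≤ 1 - t * x j by linarith) (by linarith)
    linarith
  have hGnonneg : ∀ t ∈ Set.Ioo (0:ℝ) ((X + 1)⁻¹), 0 ≤ G t := by
    intro t ht
    simp only [hGdef]
    apply Finset.sum_nonneg
    intro s _
    exact le_trans (mul_nonneg (hL0 t ht ⟨0, hd⟩) (hB ⟨0, hd⟩ s))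
      (Finset.le_sup' (fun j => L t j * B j s) (Finset.mem_univ (⟨0, hd⟩ : Fin d)))
  -- the measure formula
  have hform : ∀ t ∈ Set.Ioo (0:ℝ) ((X + 1)⁻¹),
      (P {ω | ∃ j, 1 - F (Z j ω) ≤ t * x j}) = 1 - ENNReal.ofReal (Real.exp (-G t)) := by
    intro t ht
    obtain ⟨ht0, ht1⟩ := ht
    have hx1 := hfacts t ⟨ht0, ht1⟩
    have hL0' : ∀ j, 0 ≤ L t j := hL0 t ⟨ht0, ht1⟩
    have hcond : ∀ j ω, (1 - F (Z j ω) ≤ t * x j) ↔ (1 ≤ L t j * Z j ω) := by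
      intro j ω
      rcases le_or_gt (Z j ω) 0 with hz | hz
      · rw [hF, if_neg (not_lt.mpr hz)]
        constructor
        · intro hle; exfalso; linarith [hx1 j]
        · intro hle; exfalso
          have : L t j * Z j ω ≤ 0 := mul_nonpos_of_nonneg_of_nonpos (hL0' j) hz
          linarith
      · rw [hF, if_pos hz]
        have h1a : 0 < 1 - t * x j := by linarith [hx1 j]
        constructor
        · intro hle
          have h2 : 1 - t * x j ≤ Real.exp (-1 / Z j ω) := by linarith
          have h3 : Real.log (1 - t * x j) ≤ -1 / Z j ω :=
            (Real.log_le_iff_le_exp h1a).mpr h2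
          have h4 : 1 / Z j ω ≤ L t j := by
            simp only [hLdef]
            rw [neg_div] at h3
            linarith
          calc (1:ℝ) = (1 / Z j ω) * Z j ω := by field_simp
            _ ≤ L t j * Z j ω := mul_le_mul_of_nonneg_right h4 hz.le
        · intro hle
          have h4 : 1 / Z j ω ≤ L t j := by
            rw [div_le_iff₀ hz]
            exact hle
          have h3 : Real.log (1 - t * x j) ≤ -1 / Z j ω := by
            simp only [hLdef] at h4
            rw [neg_div]
            linarith
          have h2 : 1 - t * x j ≤ Real.exp (-1 / Z j ω) :=
            (Real.log_le_iff_le_exp h1a).mp h3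
          linarith
    have hsup : ∀ j ω, (L t j * Z j ω < 1) ↔ ∀ s, (L t j * B j s) * S s ω < 1 := by
      intro j ω
      rw [hZ j ω, mul_sup'_aux hrne _ (hL0' j), Finset.sup'_lt_iff]
      constructor
      · intro h s
        rw [mul_assoc]
        exact h s (Finset.mem_univ s)
      · intro h s _
        rw [← mul_assoc]
        exact h s
    have hset : {ω | ∃ j, 1 - F (Z j ω) ≤ t * x j}
        = (⋂ s, S s ⁻¹' {y | ∀ j, (L t j * B j s) * y < 1})ᶜ := by
      ext ω
      simp only [Set.mem_setOf_eq, Set.mem_compl_iff, Set.mem_iInter, Set.mem_preimage]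
      constructor
      · rintro ⟨j, hj⟩ hall
        rw [hcond j ω] at hj
        have : L t j * Z j ω < 1 := (hsup j ω).mpr (fun s => hall s j)
        linarith
      · intro hnot
        by_contra hno
        push_neg at hno
        apply hnot
        intro s j
        have h5 : ¬ (1 ≤ L t j * Z j ω) := by
          rw [← hcond j ω]
          exact not_le.mpr (hno j)
        exact ((hsup j ω).mp (not_le.mp h5)) s
    have hGmeas : ∀ s : Fin r, MeasurableSet {y : ℝ | ∀ j, (L t j * B j s) * y < 1} := by
      intro s
      have he : {y : ℝ | ∀ j, (L t j * B j s) * y < 1}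
          = ⋂ j, {y : ℝ | (L t j * B j s) * y < 1} := by
        ext y; simp
      rw [he]
      exact MeasurableSet.iInter fun j =>
        measurableSet_lt (measurable_id.const_mul _) measurable_const
    have hCmeas : MeasurableSet (⋂ s, S s ⁻¹' {y | ∀ j, (L t j * B j s) * y < 1}) :=
      MeasurableSet.iInter fun s => (hSmeas s) (hGmeas s)
    rw [hset, prob_compl_eq_one_sub hCmeas]
    congr 1
    rw [hindep.meas_iInter (fun s => ⟨_, hGmeas s, rfl⟩)]
    have hPA : ∀ s : Fin r, P (S s ⁻¹' {y | ∀ j, (L t j * B j s) * y < 1})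
        = ENNReal.ofReal (Real.exp (-(Finset.univ.sup' hdne fun j => L t j * B j s))) := by
      intro s
      exact frechet_multi_aux P (S s) (hfrechet s) hdne (fun j => L t j * B j s)
        (fun j => mul_nonneg (hL0' j) (hB j s))
    simp only [hPA]
    rw [← ENNReal.ofReal_prod_of_nonneg (fun s _ => (Real.exp_pos _).le)]
    congr 1
    rw [← Real.exp_sum]
    congr 1
    simp only [hGdef]
    rw [Finset.sum_neg_distrib]
  -- the limit of G t / t
  have hGdiv : Tendsto (fun t => G t / t) (nhdsWithin 0 (Set.Ioi 0)) (nhds T) := by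
    have hmain : Tendsto
        (fun t => ∑ s : Fin r, Finset.univ.sup' hdne fun j => (L t j / t) * B j s)
        (nhdsWithin 0 (Set.Ioi 0)) (nhds T) := by
      rw [hTdef]
      apply tendsto_finset_sum
      intro s _
      apply tendsto_finset_sup'_aux Finset.univ hdne
        (fun j t => (L t j / t) * B j s) (fun j => B j s * x j)
      intro j _
      simp only [hLdef]
      simpa [mul_comm] using (neglog_slope_aux (x j)).mul_const (B j s)
    apply hmain.congr'
    filter_upwards [hev] with t ht
    obtain ⟨ht0, _⟩ := ht
    simp only [hGdef]
    rw [Finset.sum_div]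
    apply Finset.sum_congr rfl
    intro s _
    have e : (fun j => (L t j / t) * B j s) = fun j => t⁻¹ * (L t j * B j s) := by
      funext j; ring
    rw [e, ← mul_sup'_aux hdne _ (inv_nonneg.mpr ht0.le), div_eq_inv_mul]
  have hid : Tendsto (fun t : ℝ => t) (nhdsWithin 0 (Set.Ioi 0)) (nhds 0) :=
    tendsto_id.mono_right nhdsWithin_le_nhds
  have hG0 : Tendsto G (nhdsWithin 0 (Set.Ioi 0)) (nhds 0) := by
    have h9 := hid.mul hGdiv
    rw [zero_mul] at h9
    apply h9.congr'
    filter_upwards [hev] with t ht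
    rw [mul_comm, div_mul_cancel₀ _ (ne_of_gt ht.1)]
  have hlow : Tendsto (fun t => (G t / t) * (1 + G t)⁻¹)
      (nhdsWithin 0 (Set.Ioi 0)) (nhds T) := by
    have h1 : Tendsto (fun t => (1 + G t)⁻¹) (nhdsWithin 0 (Set.Ioi 0))
        (nhds ((1 + 0)⁻¹)) :=
      (tendsto_const_nhds.add hG0).inv₀ (by norm_num)
    have := hGdiv.mul h1
    simpa using this
  have hphi : Tendsto (fun t => t⁻¹ * (1 - Real.exp (-G t)))
      (nhdsWithin 0 (Set.Ioi 0)) (nhds T) := by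
    apply tendsto_of_tendsto_of_tendsto_of_le_of_le' hlow hGdiv
    · filter_upwards [hev] with t ht
      have ht0 := ht.1
      have hG := hGnonneg t ht
      have hexp : Real.exp (-G t) ≤ (1 + G t)⁻¹ := by
        rw [Real.exp_neg]
        apply inv_anti₀ (by linarith)
        linarith [Real.add_one_le_exp (G t)]
      have h6 : 1 - (1 + G t)⁻¹ ≤ 1 - Real.exp (-G t) := by linarith
      have h7 : G t * (1 + G t)⁻¹ = 1 - (1 + G t)⁻¹ := by
        field_simp
        ring
      calc G t / t * (1 + G t)⁻¹ = t⁻¹ * (G t * (1 + G t)⁻¹) := by ring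
        _ = t⁻¹ * (1 - (1 + G t)⁻¹) := by rw [h7]
        _ ≤ t⁻¹ * (1 - Real.exp (-G t)) :=
            mul_le_mul_of_nonneg_left h6 (inv_nonneg.mpr ht0.le)
    · filter_upwards [hev] with t ht
      have ht0 := ht.1
      have h8 : 1 - Real.exp (-G t) ≤ G t := by linarith [Real.add_one_le_exp (-G t)]
      calc t⁻¹ * (1 - Real.exp (-G t)) ≤ t⁻¹ * G t :=
            mul_le_mul_of_nonneg_left h8 (inv_nonneg.mpr ht0.le)
        _ = G t / t := by rw [div_eq_inv_mul]
  refine Filter.Tendsto.congr' ?_ hphi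
  filter_upwards [hev] with t ht
  rw [hform t ht]
  have hGt := hGnonneg t ht
  have hle1 : ENNReal.ofReal (Real.exp (-G t)) ≤ 1 := by
    rw [← ENNReal.ofReal_one]
    exact ENNReal.ofReal_le_ofReal (Real.exp_le_one_iff.mpr (by linarith))
  rw [ENNReal.toReal_sub_of_le hle1 ENNReal.one_ne_top, ENNReal.toReal_one,
    ENNReal.toReal_ofReal (Real.exp_pos _).le]
end
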